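/- With the notation of the fractional Beatty setup: if q > 2 and p₁ ≥ p₀, then r(N) ∈ {⌊p/q⌋ − 1, ⌊p/q⌋, ⌈p/q⌉} for every positive integer N. -/

import Mathlib

/-- The number of positive integers `n` with `⌊n·α + β⌋ = N`, i.e. the multiplicity
of `N` in the Beatty sequence `S(α,β)`. -/
noncomputable def beattyCount (α β : ℝ) (N : ℤ) : ℕ :=
  Nat.card {n : ℕ // 0 < n ∧ ⌊(n : ℝ) * α + β⌋ = N}

/-- `r(N)`: the number of pairs `(i, n)`, `i ∈ {1,2}`, `n ≥ 1`, with `⌊n·αᵢ⌋ = N`. -/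
noncomputable def fracBeattyR (α₁ α₂ : ℝ) (N : ℤ) : ℕ :=
  beattyCount α₁ 0 N + beattyCount α₂ 0 N

lemma beattyCount_eq (α : ℝ) (hα : 0 < α) (hirr : Irrational α) (N : ℤ) (hN : 1 ≤ N) :
    (beattyCount α 0 N : ℤ) = ⌊((N : ℝ) + 1) * (1/α)⌋ - ⌊(N : ℝ) * (1/α)⌋ := by
  have hθ : Irrational (1/α) := by rw [one_div]; exact hirr.inv
  have hθpos : 0 < 1/α := by positivity
  set a : ℤ := ⌊(N : ℝ) * (1/α)⌋ with ha
  set b : ℤ := ⌊((N : ℝ) + 1) * (1/α)⌋ with hb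
  have hNpos : (0:ℝ) < (N:ℝ) := by exact_mod_cast hN
  have ha0 : 0 ≤ a := Int.floor_nonneg.2 (by positivity)
  have hab : a ≤ b := Int.floor_le_floor (by nlinarith)
  have hb0 : 0 ≤ b := le_trans ha0 hab
  have key : ∀ n : ℕ, (0 < n ∧ ⌊(n : ℝ) * α + 0⌋ = N) ↔ n ∈ Finset.Ioc a.toNat b.toNat := by
    intro n
    simp only [Finset.mem_Ioc]
    constructor
    · rintro ⟨hn, hfl⟩
      rw [add_zero] at hfl
      have h1 := (Int.floor_eq_iff.mp hfl).1
      have h2 := (Int.floor_eq_iff.mp hfl).2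
      have hle : (N:ℝ) * (1/α) ≤ (n:ℝ) := by
        rw [mul_one_div, div_le_iff₀ hα]; exact h1
      have hne : (N:ℝ) * (1/α) ≠ (n:ℝ) := by
        have := (hθ.intCast_mul (by omega : N ≠ 0)).ne_int (n:ℤ)
        simpa using this
      have hlt : a < (n:ℤ) := Int.floor_lt.2 (by
        push_cast; exact lt_of_le_of_ne hle hne)
      have hleb : (n:ℤ) ≤ b := Int.le_floor.2 (by
        push_cast
        rw [mul_one_div, le_div_iff₀ hα]
        linarith)
      omega
    · rintro ⟨h1, h2⟩
      have hlt : a < (n:ℤ) := by omega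
      have hleb : (n:ℤ) ≤ b := by omega
      have hn0 : 0 < n := by omega
      refine ⟨hn0, ?_⟩
      have hL : (N:ℝ) * (1/α) < (n:ℝ) := by
        have := Int.lt_floor_add_one ((N:ℝ) * (1/α))
        have h' : ((a:ℝ) + 1) ≤ (n:ℝ) := by exact_mod_cast hlt
        linarith
      have hR : (n:ℝ) ≤ ((N:ℝ) + 1) * (1/α) := by
        have := Int.floor_le (((N:ℝ) + 1) * (1/α))
        have h' : (n:ℝ) ≤ (b:ℝ) := by exact_mod_cast hleb
        linarith
      have hRne : (n:ℝ) ≠ ((N:ℝ) + 1) * (1/α) := by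
        have : Irrational (((N+1 : ℤ):ℝ) * (1/α)) := hθ.intCast_mul (by omega : N + 1 ≠ 0)
        have := this.ne_int (n:ℤ)
        intro h; apply this; push_cast; push_cast at h; linarith
      have hR' : (n:ℝ) < ((N:ℝ) + 1) * (1/α) := lt_of_le_of_ne hR hRne
      rw [add_zero]
      rw [Int.floor_eq_iff]
      constructor
      · rw [mul_one_div, div_lt_iff₀ hα] at hL; linarith
      · push_cast
        rw [mul_one_div, lt_div_iff₀ hα] at hR'; linarith
  have hcard : beattyCount α 0 N = (Finset.Ioc a.toNat b.toNat).card := by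
    unfold beattyCount
    rw [Nat.card_congr (Equiv.subtypeEquivRight key)]
    exact Nat.card_eq_finsetCard _
  rw [hcard, Nat.card_Ioc]
  omega



lemma floor_sum_split (t1 t2 c x : ℝ) (ht : t1 + t2 = c) :
    ∃ d : ℤ, ⌊x*t1⌋ + ⌊x*t2⌋ = ⌊x*c⌋ - d ∧ (d = 0 ∨ d = 1) ∧
      (d = 1 ↔ Int.fract (x*c) < Int.fract (x*t1)) := by
  refine ⟨⌊x*c⌋ - ⌊x*t1⌋ - ⌊x*t2⌋, by ring, ?_, ?_⟩
  · have hdr : ((⌊x*c⌋ - ⌊x*t1⌋ - ⌊x*t2⌋ : ℤ) : ℝ)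
        = Int.fract (x*t1) + Int.fract (x*t2) - Int.fract (x*c) := by
      simp only [Int.fract]
      push_cast
      have : x * c = x * t1 + x * t2 := by rw [← ht]; ring
      linarith
    have b1 := Int.fract_nonneg (x*t1)
    have b2 := Int.fract_nonneg (x*t2)
    have b3 := Int.fract_nonneg (x*c)
    have c1 := Int.fract_lt_one (x*t1)
    have c2 := Int.fract_lt_one (x*t2)
    have c3 := Int.fract_lt_one (x*c)
    have h1 : (-1 : ℝ) < ((⌊x*c⌋ - ⌊x*t1⌋ - ⌊x*t2⌋ : ℤ) : ℝ) := by rw [hdr]; linarith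
    have h2 : ((⌊x*c⌋ - ⌊x*t1⌋ - ⌊x*t2⌋ : ℤ) : ℝ) < 2 := by rw [hdr]; linarith
    have h1' : (-1 : ℤ) < ⌊x*c⌋ - ⌊x*t1⌋ - ⌊x*t2⌋ := by exact_mod_cast h1
    have h2' : ⌊x*c⌋ - ⌊x*t1⌋ - ⌊x*t2⌋ < 2 := by exact_mod_cast h2
    omega
  · have hdr : ((⌊x*c⌋ - ⌊x*t1⌋ - ⌊x*t2⌋ : ℤ) : ℝ)
        = Int.fract (x*t1) + Int.fract (x*t2) - Int.fract (x*c) := by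
      simp only [Int.fract]
      push_cast
      have : x * c = x * t1 + x * t2 := by rw [← ht]; ring
      linarith
    have b2 := Int.fract_nonneg (x*t2)
    have c2 := Int.fract_lt_one (x*t2)
    constructor
    · intro h
      have : ((⌊x*c⌋ - ⌊x*t1⌋ - ⌊x*t2⌋ : ℤ) : ℝ) = 1 := by rw [h]; norm_num
      rw [hdr] at this
      linarith
    · intro h
      have h0 : (0:ℝ) < ((⌊x*c⌋ - ⌊x*t1⌋ - ⌊x*t2⌋ : ℤ) : ℝ) := by rw [hdr]; linarith
      have h0' : (0:ℤ) < ⌊x*c⌋ - ⌊x*t1⌋ - ⌊x*t2⌋ := by exact_mod_cast h0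
      have h2 : ((⌊x*c⌋ - ⌊x*t1⌋ - ⌊x*t2⌋ : ℤ) : ℝ) < 2 := by
        rw [hdr]
        have := Int.fract_lt_one (x*t1)
        have := Int.fract_nonneg (x*c)
        linarith
      have h2' : ⌊x*c⌋ - ⌊x*t1⌋ - ⌊x*t2⌋ < 2 := by exact_mod_cast h2
      omega

lemma fract_add_cases (x c : ℝ) :
    Int.fract (x + c) = Int.fract x + Int.fract c ∨
    Int.fract (x + c) = Int.fract x + Int.fract c - 1 := by
  have hdr : ((⌊x⌋ + ⌊c⌋ - ⌊x+c⌋ : ℤ) : ℝ)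
      = Int.fract (x+c) - Int.fract x - Int.fract c := by
    simp only [Int.fract]; push_cast; ring
  have b1 := Int.fract_nonneg (x+c)
  have b2 := Int.fract_nonneg x
  have b3 := Int.fract_nonneg c
  have c1 := Int.fract_lt_one (x+c)
  have c2 := Int.fract_lt_one x
  have c3 := Int.fract_lt_one c
  have h1 : (-2 : ℝ) < ((⌊x⌋ + ⌊c⌋ - ⌊x+c⌋ : ℤ) : ℝ) := by rw [hdr]; linarith
  have h2 : ((⌊x⌋ + ⌊c⌋ - ⌊x+c⌋ : ℤ) : ℝ) < 1 := by rw [hdr]; linarith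
  have h1' : (-2 : ℤ) < ⌊x⌋ + ⌊c⌋ - ⌊x+c⌋ := by exact_mod_cast h1
  have h2' : ⌊x⌋ + ⌊c⌋ - ⌊x+c⌋ < 1 := by exact_mod_cast h2
  have : ⌊x⌋ + ⌊c⌋ - ⌊x+c⌋ = 0 ∨ ⌊x⌋ + ⌊c⌋ - ⌊x+c⌋ = -1 := by omega
  rcases this with h | h
  · left
    have : ((⌊x⌋ + ⌊c⌋ - ⌊x+c⌋ : ℤ) : ℝ) = 0 := by rw [h]; norm_num
    rw [hdr] at this; linarith
  · right
    have : ((⌊x⌋ + ⌊c⌋ - ⌊x+c⌋ : ℤ) : ℝ) = -1 := by rw [h]; norm_num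
    rw [hdr] at this; linarith

theorem fractional_beatty_values_case_two (p q : ℕ) (hp : 0 < p) (hq : 0 < q)
    (hpq : Nat.Coprime p q) (α₁ α₂ : ℝ) (h1 : 0 < α₁) (h2 : 0 < α₂)
    (hi1 : Irrational α₁) (hi2 : Irrational α₂)
    (hsum : 1 / α₁ + 1 / α₂ = (p : ℝ) / q)
    (p₁ : ℕ) (hp₁ : p₁ < q)
    (hfr₁ : (p₁ : ℝ) / q < Int.fract (1 / α₁))
    (hfr₂ : Int.fract (1 / α₁) < ((p₁ : ℝ) + 1) / q)
    (hq2 : 2 < q) (hcase : p % q ≤ p₁) :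
    ∀ N : ℤ, 1 ≤ N →
      (fracBeattyR α₁ α₂ N : ℤ) = ⌊(p : ℚ) / q⌋ - 1 ∨
      (fracBeattyR α₁ α₂ N : ℤ) = ⌊(p : ℚ) / q⌋ ∨
      (fracBeattyR α₁ α₂ N : ℤ) = ⌈(p : ℚ) / q⌉ := by
  intro N hN
  have hq0 : (0:ℝ) < q := by exact_mod_cast hq
  set c : ℝ := (p : ℝ) / q with hc
  set F : ℤ := ⌊(p : ℚ) / q⌋ with hF
  set p₀ : ℕ := p % q with hp₀
  -- basic facts about p₀ and F
  have hp₀pos : 0 < p₀ := by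
    rcases Nat.eq_zero_or_pos p₀ with h | h
    · exfalso
      have hdvd : q ∣ p := Nat.dvd_of_mod_eq_zero h
      have : q ∣ Nat.gcd p q := Nat.dvd_gcd hdvd dvd_rfl
      rw [hpq] at this
      have := Nat.le_of_dvd one_pos this
      omega
    · exact h
  have hp₀lt : p₀ < q := Nat.mod_lt _ hq
  have hFdiv : F = (p : ℤ) / (q : ℤ) := by
    rw [hF, show ((p:ℚ)) = ((p:ℤ):ℚ) by push_cast; ring]
    exact Rat.floor_intCast_div_natCast _ _
  have hF2 : (q:ℤ) * F + (p₀ : ℤ) = (p : ℤ) := by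
    rw [hFdiv, hp₀]; push_cast; exact Int.mul_ediv_add_emod _ _
  have hF2' : ((q:ℝ)) * (F:ℝ) + (p₀:ℝ) = (p:ℝ) := by exact_mod_cast hF2
  have hFr : (F:ℝ) = c - (p₀:ℝ)/q := by
    rw [hc]; field_simp; linarith
  have hceil : ⌈(p : ℚ) / q⌉ = F + 1 := by
    rw [Int.ceil_eq_iff]
    have hq0' : (0:ℚ) < q := by exact_mod_cast hq
    have hF2q : ((q:ℚ)) * (F:ℚ) + (p₀:ℚ) = (p:ℚ) := by exact_mod_cast hF2
    have h₁ : (p₀:ℚ) / q < 1 := by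
      rw [div_lt_one hq0']; exact_mod_cast hp₀lt
    have h₂ : (0:ℚ) < (p₀:ℚ) / q := by positivity
    have hFrq : (F:ℚ) = (p:ℚ)/q - (p₀:ℚ)/q := by field_simp; linarith
    constructor
    · push_cast; rw [hFrq]; linarith
    · push_cast; rw [hFrq]; linarith
  -- fract of c
  have hfc : Int.fract c = (p₀:ℝ)/q := by
    have hfl : ⌊c⌋ = F := by
      rw [hF, ← Rat.floor_cast (α := ℝ)]
      congr 1
      push_cast; ring
    rw [Int.fract, hfl, hFr]; ring
  -- the structural splits at N and N+1
  obtain ⟨dN, hgN, hdN01, hdN1⟩ := floor_sum_split (1/α₁) (1/α₂) c ((N:ℝ)) hsum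
  obtain ⟨dM, hgM, hdM01, hdM1⟩ := floor_sum_split (1/α₁) (1/α₂) c ((N:ℝ)+1) hsum
  -- r(N) in terms of floors
  have hB1 := beattyCount_eq α₁ h1 hi1 N hN
  have hB2 := beattyCount_eq α₂ h2 hi2 N hN
  have hr : (fracBeattyR α₁ α₂ N : ℤ)
      = (⌊((N:ℝ)+1) * (1/α₁)⌋ + ⌊((N:ℝ)+1) * (1/α₂)⌋)
        - (⌊(N:ℝ) * (1/α₁)⌋ + ⌊(N:ℝ) * (1/α₂)⌋) := by
    unfold fracBeattyR
    push_cast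
    rw [hB1, hB2]; ring
  have hr2 : (fracBeattyR α₁ α₂ N : ℤ) = ⌊((N:ℝ)+1)*c⌋ - ⌊(N:ℝ)*c⌋ - dM + dN := by
    rw [hr, hgN, hgM]; ring
  -- D := floor difference for c
  set D : ℤ := ⌊((N:ℝ)+1)*c⌋ - ⌊(N:ℝ)*c⌋ with hD
  set vN : ℝ := Int.fract ((N:ℝ)*c) with hvN
  set vM : ℝ := Int.fract (((N:ℝ)+1)*c) with hvM
  have hDr : (D:ℝ) = (F:ℝ) + (p₀:ℝ)/q + vN - vM := by
    have e1 : (((N:ℝ)+1)*c) - vM = (⌊((N:ℝ)+1)*c⌋ : ℝ) := by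
      rw [hvM, Int.fract]; ring
    have e2 : ((N:ℝ)*c) - vN = (⌊(N:ℝ)*c⌋ : ℝ) := by
      rw [hvN, Int.fract]; ring
    have e3 : (D:ℝ) = (⌊((N:ℝ)+1)*c⌋ : ℝ) - (⌊(N:ℝ)*c⌋ : ℝ) := by
      rw [hD]; push_cast; ring
    have e4 : ((N:ℝ)+1)*c = (N:ℝ)*c + c := by ring
    linarith [hFr]
  -- split on fract addition
  have hsplit : vM = vN + (p₀:ℝ)/q ∨ vM = vN + (p₀:ℝ)/q - 1 := by
    have := fract_add_cases ((N:ℝ)*c) c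
    rw [hfc] at this
    have he : ((N:ℝ)+1)*c = (N:ℝ)*c + c := by ring
    rw [hvM, he, hvN]
    exact this
  have hq0ne : (q:ℝ) ≠ 0 := ne_of_gt hq0
  rw [hceil, hr2]
  rcases hsplit with hv | hv
  · -- no drop : D = F
    have : (D:ℝ) = (F:ℝ) := by rw [hDr, hv]; ring
    have hDF : D = F := by exact_mod_cast this
    rcases hdN01 with h | h <;> rcases hdM01 with h' | h' <;> omega
  · -- drop : D = F + 1
    have : (D:ℝ) = (F:ℝ) + 1 := by rw [hDr, hv]; ring
    have hDF : D = F + 1 := by exact_mod_cast this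
    rcases hdN01 with h | h <;> rcases hdM01 with h' | h'
    · omega
    · omega
    · -- dN = 1, dM = 0 : contradiction
      exfalso
      have huN : vN < Int.fract ((N:ℝ) * (1/α₁)) := hdN1.mp h
      have huM : Int.fract (((N:ℝ)+1) * (1/α₁)) ≤ vM := by
        by_contra hcon
        push_neg at hcon
        have := hdM1.mpr hcon
        omega
      -- fract superadditivity
      have hfl : ⌊((N:ℝ)+1) * (1/α₁)⌋ ≤ ⌊(N:ℝ) * (1/α₁)⌋ + ⌊(1/α₁)⌋ + 1 := by
        have l1 := Int.lt_floor_add_one ((N:ℝ) * (1/α₁))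
        have l2 := Int.lt_floor_add_one ((1:ℝ)/α₁)
        have e4 : ((N:ℝ)+1)*(1/α₁) = (N:ℝ)*(1/α₁) + (1/α₁) := by ring
        have : ⌊((N:ℝ)+1) * (1/α₁)⌋ < ⌊(N:ℝ) * (1/α₁)⌋ + ⌊(1/α₁)⌋ + 2 := by
          apply Int.floor_lt.2
          push_cast
          linarith
        omega
      have hfl' : ((⌊((N:ℝ)+1) * (1/α₁)⌋ : ℤ) : ℝ)
          ≤ ((⌊(N:ℝ) * (1/α₁)⌋ + ⌊(1/α₁)⌋ + 1 : ℤ) : ℝ) := by exact_mod_cast hfl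
      have hsup : Int.fract ((N:ℝ) * (1/α₁)) + Int.fract (1/α₁) - 1
          ≤ Int.fract (((N:ℝ)+1) * (1/α₁)) := by
        simp only [Int.fract]
        have e4 : ((N:ℝ)+1)*(1/α₁) = (N:ℝ)*(1/α₁) + (1/α₁) := by ring
        push_cast at hfl' ⊢
        linarith
      have hple : (p₀:ℝ)/q ≤ (p₁:ℝ)/q := by
        have : (p₀:ℝ) ≤ (p₁:ℝ) := by exact_mod_cast hcase
        gcongr
      linarith
    · omega
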